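/- Let Γ > 0, E_r ∈ ℝ, and let μ be the Cauchy probability measure on ℝ with density (1/π)·Γ/((x − E_r)² + Γ²). Then for every λ ∈ ℝ the energy width ΔE(λ) := inf{ε ∈ (0,∞) : ∫_ℝ 2ε²/((x−λ)² + ε²) dμ(x) ≥ 1} equals √(Γ² + (λ − E_r)²); in particular ΔE(λ) is minimal exactly at λ = E_r, where it equals Γ, the half-width at half-maximum of the Lorentzian distribution. -/

import Mathlib

open MeasureTheory
open scoped ENNReal

open Filter Real
open scoped NNReal ENNReal
set_option maxHeartbeats 1000000

/-- The Cauchy (Lorentzian) probability measure centred at `E_r` with half-width `Γ`,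
i.e. the measure with density `x ↦ (1/π)·Γ/((x − E_r)² + Γ²)` w.r.t. Lebesgue measure. -/
noncomputable def cauchyMeasure (Er Γ : ℝ) : Measure ℝ :=
  volume.withDensity fun x => ENNReal.ofReal ((1 / Real.pi) * Γ / ((x - Er) ^ 2 + Γ ^ 2))

/-- The energy width at `λ` of the measure `μ`:
`ΔE(λ) = inf{ε ∈ (0,∞) : ∫ 2ε²/((x−λ)² + ε²) dμ(x) ≥ 1}`. -/
noncomputable def energyWidthMeasure (μ : Measure ℝ) (lam : ℝ) : ℝ :=
  sInf {ε : ℝ | 0 < ε ∧ 1 ≤ ∫ x, 2 * ε ^ 2 / ((x - lam) ^ 2 + ε ^ 2) ∂μ}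


lemma integrable_inv_sq_add (c d : ℝ) (hd : 0 < d) :
    Integrable fun x : ℝ => ((x - c) ^ 2 + d ^ 2)⁻¹ := by
  have h1 : Integrable fun x : ℝ => (1 + x ^ 2)⁻¹ := integrable_inv_one_add_sq
  have h2 : Integrable fun x : ℝ => (1 + (d⁻¹ * x) ^ 2)⁻¹ :=
    (integrable_comp_mul_left_iff _ (inv_ne_zero hd.ne')).2 h1
  have h3 : Integrable fun x : ℝ => (x ^ 2 + d ^ 2)⁻¹ := by
    have : (fun x : ℝ => (x ^ 2 + d ^ 2)⁻¹)
        = fun x : ℝ => (d ^ 2)⁻¹ * (1 + (d⁻¹ * x) ^ 2)⁻¹ := by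
      funext x
      have hd2 : (d : ℝ) ^ 2 ≠ 0 := by positivity
      field_simp
      ring
    rw [this]
    exact h2.const_mul _
  exact h3.comp_sub_right c

/-- ratio of shifted quadratics tends to 1 along `l` whenever `x⁻¹ → 0` along `l`. -/
lemma tendsto_quad_ratio (a b c d : ℝ) (hb : 0 < b) (hd : 0 < d) {l : Filter ℝ}
    (hl : Tendsto (fun x : ℝ => x⁻¹) l (nhds 0))
    (hl' : ∀ᶠ x : ℝ in l, x ≠ 0) :
    Tendsto (fun x : ℝ => ((x - a) ^ 2 + b ^ 2) / ((x - c) ^ 2 + d ^ 2)) l (nhds 1) := by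
  have hφ : ContinuousAt (fun t : ℝ => ((1 - a * t) ^ 2 + (b * t) ^ 2)
      / ((1 - c * t) ^ 2 + (d * t) ^ 2)) 0 := by
    apply ContinuousAt.div (by fun_prop) (by fun_prop)
    norm_num
  have h0 : Tendsto (fun x : ℝ => ((1 - a * x⁻¹) ^ 2 + (b * x⁻¹) ^ 2)
      / ((1 - c * x⁻¹) ^ 2 + (d * x⁻¹) ^ 2)) l (nhds 1) := by
    have := hφ.tendsto.comp hl
    simpa [Function.comp_def] using this
  apply h0.congr'
  filter_upwards [hl'] with x hx
  have h1 : (x - c) ^ 2 + d ^ 2 > 0 := by positivity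
  have h2 : (1 - c * x⁻¹) ^ 2 + (d * x⁻¹) ^ 2 > 0 := by
    have : (1 - c * x⁻¹) ^ 2 + (d * x⁻¹) ^ 2 = ((x - c) ^ 2 + d ^ 2) / x ^ 2 := by
      field_simp
    rw [this]; positivity
  rw [div_eq_div_iff h2.ne' h1.ne']
  field_simp

lemma conv_integral (a c b d : ℝ) (hb : 0 < b) (hd : 0 < d)
    (hQ2 : (c - a) ^ 2 + (b - d) ^ 2 ≠ 0) :
    ∫ x : ℝ, (((x - a) ^ 2 + b ^ 2) * ((x - c) ^ 2 + d ^ 2))⁻¹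
      = Real.pi * (b + d) / (b * d * ((c - a) ^ 2 + (b + d) ^ 2)) := by
  have hQ2pos : 0 < (c - a) ^ 2 + (b - d) ^ 2 := lt_of_le_of_ne (by positivity) (Ne.symm hQ2)
  set m : ℝ := c - a with hm
  have hQ1pos : 0 < m ^ 2 + (b + d) ^ 2 := by positivity
  set Q : ℝ := (m ^ 2 + (b + d) ^ 2) * (m ^ 2 + (b - d) ^ 2) with hQdef
  have hQpos : 0 < Q := mul_pos hQ1pos hQ2pos
  set A : ℝ := 2 * m / Q with hA
  set B : ℝ := (m ^ 2 + d ^ 2 - b ^ 2) / Q with hB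
  set D : ℝ := (m ^ 2 - d ^ 2 + b ^ 2) / Q with hD
  set F : ℝ → ℝ := fun x =>
      A / 2 * (Real.log ((x - a) ^ 2 + b ^ 2) - Real.log ((x - c) ^ 2 + d ^ 2))
      + B / b * Real.arctan ((x - a) / b) + D / d * Real.arctan ((x - c) / d) with hF
  -- derivative
  have hderiv : ∀ x : ℝ,
      HasDerivAt F ((((x - a) ^ 2 + b ^ 2) * ((x - c) ^ 2 + d ^ 2))⁻¹) x := by
    intro x
    have p1 : (0:ℝ) < (x - a) ^ 2 + b ^ 2 := by positivity
    have p2 : (0:ℝ) < (x - c) ^ 2 + d ^ 2 := by positivity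
    have d1 : HasDerivAt (fun x : ℝ => (x - a) ^ 2 + b ^ 2) (2 * (x - a)) x := by
      have := (((hasDerivAt_id x).sub_const a).pow 2).add_const (b ^ 2)
      simpa using this
    have d2 : HasDerivAt (fun x : ℝ => (x - c) ^ 2 + d ^ 2) (2 * (x - c)) x := by
      have := (((hasDerivAt_id x).sub_const c).pow 2).add_const (d ^ 2)
      simpa using this
    have l1 := d1.log p1.ne'
    have l2 := d2.log p2.ne'
    have a1 : HasDerivAt (fun y : ℝ => Real.arctan ((y - a) / b))
        (1 / (1 + ((x - a) / b) ^ 2) * (1 / b)) x := by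
      have h := (Real.hasDerivAt_arctan ((x - a) / b)).comp x
        (((hasDerivAt_id x).sub_const a).div_const b)
      simpa [Function.comp_def] using h
    have a2 : HasDerivAt (fun y : ℝ => Real.arctan ((y - c) / d))
        (1 / (1 + ((x - c) / d) ^ 2) * (1 / d)) x := by
      have h := (Real.hasDerivAt_arctan ((x - c) / d)).comp x
        (((hasDerivAt_id x).sub_const c).div_const d)
      simpa [Function.comp_def] using h
    have hsum := (((l1.sub l2).const_mul (A / 2)).add (a1.const_mul (B / b))).add
      (a2.const_mul (D / d))
    refine hsum.congr_deriv ?_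
    have t1 : B / b * (1 / (1 + ((x - a) / b) ^ 2) * (1 / b)) = B / ((x - a) ^ 2 + b ^ 2) := by
      have e1 : (1 : ℝ) + ((x - a) / b) ^ 2 ≠ 0 := by positivity
      rw [eq_div_iff p1.ne']
      field_simp
      ring
    have t2 : D / d * (1 / (1 + ((x - c) / d) ^ 2) * (1 / d)) = D / ((x - c) ^ 2 + d ^ 2) := by
      have e2 : (1 : ℝ) + ((x - c) / d) ^ 2 ≠ 0 := by positivity
      rw [eq_div_iff p2.ne']
      field_simp
      ring
    have hnum : (A * (x - a) + B) * ((x - c) ^ 2 + d ^ 2)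
        + (-(A * (x - c)) + D) * ((x - a) ^ 2 + b ^ 2) = 1 := by
      rw [hA, hB, hD, hQdef, hm]
      have hQ' : ((c - a) ^ 2 + (b + d) ^ 2) * ((c - a) ^ 2 + (b - d) ^ 2) ≠ 0 := by
        rw [← hm, ← hQdef]; exact hQpos.ne'
      have hQ1' : (c - a) ^ 2 + (b + d) ^ 2 ≠ 0 := by rw [← hm]; exact hQ1pos.ne'
      have hQ2' : (c - a) ^ 2 + (b - d) ^ 2 ≠ 0 := by rw [← hm]; exact hQ2pos.ne'
      field_simp
      ring
    have key : A / 2 * (2 * (x - a) / ((x - a) ^ 2 + b ^ 2)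
          - 2 * (x - c) / ((x - c) ^ 2 + d ^ 2))
        + B / ((x - a) ^ 2 + b ^ 2) + D / ((x - c) ^ 2 + d ^ 2)
        = ((A * (x - a) + B) * ((x - c) ^ 2 + d ^ 2)
            + (-(A * (x - c)) + D) * ((x - a) ^ 2 + b ^ 2))
            / (((x - a) ^ 2 + b ^ 2) * ((x - c) ^ 2 + d ^ 2)) := by
      field_simp
      ring
    rw [t1, t2, key, hnum, one_div]
  -- integrability
  have hcont : Continuous fun x : ℝ => (((x - a) ^ 2 + b ^ 2) * ((x - c) ^ 2 + d ^ 2))⁻¹ :=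
    Continuous.inv₀ (by continuity) (fun x => by positivity)
  have hint : Integrable fun x : ℝ => (((x - a) ^ 2 + b ^ 2) * ((x - c) ^ 2 + d ^ 2))⁻¹ := by
    apply Integrable.mono' (((integrable_inv_sq_add c d hd).const_mul ((b ^ 2)⁻¹)))
      hcont.aestronglyMeasurable
    refine Filter.Eventually.of_forall fun x => ?_
    have p1 : (0:ℝ) < (x - a) ^ 2 + b ^ 2 := by positivity
    have p2 : (0:ℝ) < (x - c) ^ 2 + d ^ 2 := by positivity
    rw [Real.norm_eq_abs, abs_of_pos (by positivity), mul_inv]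
    apply mul_le_mul_of_nonneg_right _ (by positivity)
    exact inv_anti₀ (by positivity) (by nlinarith)
  -- limits of the log part
  have hinvBot : Tendsto (fun x : ℝ => x⁻¹) atBot (nhds 0) := by
    have h := (tendsto_inv_atTop_zero (𝕜 := ℝ)).comp tendsto_neg_atBot_atTop
    have h2 := h.neg
    simp only [Function.comp_def] at h2
    simpa [inv_neg] using h2
  have hlog : ∀ l : Filter ℝ, Tendsto (fun x : ℝ => x⁻¹) l (nhds 0) →
      (∀ᶠ x : ℝ in l, x ≠ 0) →
      Tendsto (fun x : ℝ => Real.log ((x - a) ^ 2 + b ^ 2)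
        - Real.log ((x - c) ^ 2 + d ^ 2)) l (nhds 0) := by
    intro l hl hl'
    have hr := tendsto_quad_ratio a b c d hb hd hl hl'
    have h := (Real.continuousAt_log one_ne_zero).tendsto.comp hr
    rw [Real.log_one] at h
    apply h.congr
    intro x
    have p1 : (0:ℝ) < (x - a) ^ 2 + b ^ 2 := by positivity
    have p2 : (0:ℝ) < (x - c) ^ 2 + d ^ 2 := by positivity
    simp only [Function.comp_apply]
    rw [Real.log_div p1.ne' p2.ne']
  have hlogTop := hlog atTop tendsto_inv_atTop_zero
    ((eventually_gt_atTop 0).mono fun x hx => hx.ne')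
  have hlogBot := hlog atBot hinvBot ((eventually_lt_atBot 0).mono fun x hx => hx.ne)
  -- limits of the arctan parts
  have hinnerTop : ∀ e : ℝ, Tendsto (fun x : ℝ => (x - e) / b) atTop atTop := fun e =>
    (tendsto_atTop_add_const_right atTop (-e) tendsto_id).atTop_div_const hb
  have hinnerTop' : ∀ e : ℝ, Tendsto (fun x : ℝ => (x - e) / d) atTop atTop := fun e =>
    (tendsto_atTop_add_const_right atTop (-e) tendsto_id).atTop_div_const hd
  have hinnerBot : ∀ e : ℝ, Tendsto (fun x : ℝ => (x - e) / b) atBot atBot := fun e =>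
    (tendsto_atBot_add_const_right atBot (-e) tendsto_id).atBot_div_const hb
  have hinnerBot' : ∀ e : ℝ, Tendsto (fun x : ℝ => (x - e) / d) atBot atBot := fun e =>
    (tendsto_atBot_add_const_right atBot (-e) tendsto_id).atBot_div_const hd
  have ha1Top : Tendsto (fun x : ℝ => Real.arctan ((x - a) / b)) atTop (nhds (π / 2)) :=
    (tendsto_nhds_of_tendsto_nhdsWithin Real.tendsto_arctan_atTop).comp (hinnerTop a)
  have ha2Top : Tendsto (fun x : ℝ => Real.arctan ((x - c) / d)) atTop (nhds (π / 2)) :=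
    (tendsto_nhds_of_tendsto_nhdsWithin Real.tendsto_arctan_atTop).comp (hinnerTop' c)
  have ha1Bot : Tendsto (fun x : ℝ => Real.arctan ((x - a) / b)) atBot (nhds (-(π / 2))) :=
    (tendsto_nhds_of_tendsto_nhdsWithin Real.tendsto_arctan_atBot).comp (hinnerBot a)
  have ha2Bot : Tendsto (fun x : ℝ => Real.arctan ((x - c) / d)) atBot (nhds (-(π / 2))) :=
    (tendsto_nhds_of_tendsto_nhdsWithin Real.tendsto_arctan_atBot).comp (hinnerBot' c)
  have hFtop : Tendsto F atTop
      (nhds (A / 2 * 0 + B / b * (π / 2) + D / d * (π / 2))) :=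
    ((hlogTop.const_mul (A / 2)).add (ha1Top.const_mul (B / b))).add
      (ha2Top.const_mul (D / d))
  have hFbot : Tendsto F atBot
      (nhds (A / 2 * 0 + B / b * (-(π / 2)) + D / d * (-(π / 2)))) :=
    ((hlogBot.const_mul (A / 2)).add (ha1Bot.const_mul (B / b))).add
      (ha2Bot.const_mul (D / d))
  rw [integral_of_hasDerivAt_of_tendsto hderiv hint hFbot hFtop]
  rw [hA, hB, hD, hQdef]
  have hπ : (0:ℝ) < π := Real.pi_pos
  have h1 : ((c - a) ^ 2 + (b + d) ^ 2) ≠ 0 := hQ1pos.ne'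
  have h2 : ((c - a) ^ 2 + (b - d) ^ 2) ≠ 0 := hQ2pos.ne'
  field_simp
  ring

lemma sq_add_sq_ne_left {u : ℝ} (v : ℝ) (hu : u ≠ 0) : u ^ 2 + v ^ 2 ≠ 0 := by positivity

lemma sq_add_sq_ne_right (u : ℝ) {v : ℝ} (hv : v ≠ 0) : u ^ 2 + v ^ 2 ≠ 0 := by positivity

lemma cauchy_integral_eval (Er Γ : ℝ) (hΓ : 0 < Γ) (lam ε : ℝ) (hε : 0 < ε)
    (hQ : (Er - lam) ^ 2 + (ε - Γ) ^ 2 ≠ 0) :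
    ∫ x, 2 * ε ^ 2 / ((x - lam) ^ 2 + ε ^ 2) ∂(cauchyMeasure Er Γ)
      = 2 * ε * (ε + Γ) / ((lam - Er) ^ 2 + (ε + Γ) ^ 2) := by
  have hπ : (0:ℝ) < π := Real.pi_pos
  have hcont : Continuous fun x : ℝ => (1 / π) * Γ / ((x - Er) ^ 2 + Γ ^ 2) :=
    continuous_const.div (by continuity) (fun x => by positivity)
  have hmeas : Measurable fun x : ℝ => ((1 / π) * Γ / ((x - Er) ^ 2 + Γ ^ 2)).toNNReal :=
    hcont.measurable.real_toNNReal
  have hrw : cauchyMeasure Er Γ = volume.withDensity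
      (fun x => ((((1 / π) * Γ / ((x - Er) ^ 2 + Γ ^ 2)).toNNReal : ℝ≥0) : ℝ≥0∞)) := rfl
  rw [hrw, integral_withDensity_eq_integral_smul hmeas]
  have heq : ∀ x : ℝ, (((1 / π) * Γ / ((x - Er) ^ 2 + Γ ^ 2)).toNNReal : ℝ≥0)
        • (2 * ε ^ 2 / ((x - lam) ^ 2 + ε ^ 2))
      = (2 * ε ^ 2 * Γ / π) * (((x - lam) ^ 2 + ε ^ 2) * ((x - Er) ^ 2 + Γ ^ 2))⁻¹ := by
    intro x
    have p1 : (0:ℝ) < (x - lam) ^ 2 + ε ^ 2 := by positivity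
    have p2 : (0:ℝ) < (x - Er) ^ 2 + Γ ^ 2 := by positivity
    have hpos : 0 ≤ (1 / π) * Γ / ((x - Er) ^ 2 + Γ ^ 2) := by positivity
    rw [NNReal.smul_def, smul_eq_mul, Real.coe_toNNReal _ hpos]
    field_simp
  rw [integral_congr_ae (Filter.Eventually.of_forall heq), integral_const_mul,
    conv_integral lam Er ε Γ hε hΓ hQ]
  have h1 : ((Er - lam) ^ 2 + (ε + Γ) ^ 2) ≠ 0 := by positivity
  have h2 : ((lam - Er) ^ 2 + (ε + Γ) ^ 2) ≠ 0 := by positivity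
  field_simp
  ring

/-- For the Cauchy measure with density `(1/π)·Γ/((x−E_r)² + Γ²)`
(`Γ > 0`), the energy width at every `λ` equals `√(Γ² + (λ − E_r)²)`; in particular it is
minimal exactly at `λ = E_r`, where it equals `Γ`, the half-width at half-maximum. -/
theorem energyWidth_cauchyMeasure (Γ Er : ℝ) (hΓ : 0 < Γ) :
    (∀ lam : ℝ, energyWidthMeasure (cauchyMeasure Er Γ) lam
        = Real.sqrt (Γ ^ 2 + (lam - Er) ^ 2)) ∧
    energyWidthMeasure (cauchyMeasure Er Γ) Er = Γ ∧
    ∀ lam : ℝ, lam ≠ Er →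
      energyWidthMeasure (cauchyMeasure Er Γ) Er
        < energyWidthMeasure (cauchyMeasure Er Γ) lam := by
  have hmain : ∀ lam : ℝ, energyWidthMeasure (cauchyMeasure Er Γ) lam
      = Real.sqrt (Γ ^ 2 + (lam - Er) ^ 2) := by
    intro lam
    unfold energyWidthMeasure
    set S := {ε : ℝ | 0 < ε ∧
      1 ≤ ∫ x, 2 * ε ^ 2 / ((x - lam) ^ 2 + ε ^ 2) ∂(cauchyMeasure Er Γ)} with hS
    set s : ℝ := Real.sqrt (Γ ^ 2 + (lam - Er) ^ 2) with hs
    have hs2 : s ^ 2 = Γ ^ 2 + (lam - Er) ^ 2 := Real.sq_sqrt (by positivity)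
    have hsΓ : Γ ≤ s := by
      have h' := Real.sqrt_le_sqrt (show Γ ^ 2 ≤ Γ ^ 2 + (lam - Er) ^ 2 by nlinarith [sq_nonneg (lam - Er)])
      rwa [Real.sqrt_sq hΓ.le] at h'
    have hspos : 0 < s := lt_of_lt_of_le hΓ hsΓ
    -- membership criterion away from degeneracy
    have hcrit : ∀ ε : ℝ, 0 < ε → (Er - lam) ^ 2 + (ε - Γ) ^ 2 ≠ 0 →
        (ε ∈ S ↔ s ≤ ε) := by
      intro ε hε hQ
      have hI := cauchy_integral_eval Er Γ hΓ lam ε hε hQ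
      have hD : (0:ℝ) < (lam - Er) ^ 2 + (ε + Γ) ^ 2 := by positivity
      constructor
      · rintro ⟨-, h1⟩
        rw [hI, le_div_iff₀ hD] at h1
        have hε2 : s ^ 2 ≤ ε ^ 2 := by nlinarith
        have h' := Real.sqrt_le_sqrt hε2
        rwa [Real.sqrt_sq hspos.le, Real.sqrt_sq hε.le] at h'
      · intro h
        refine ⟨lt_of_lt_of_le hspos h, ?_⟩
        rw [hI, le_div_iff₀ hD]
        have : s ^ 2 ≤ ε ^ 2 := by nlinarith [hspos.le]
        nlinarith
    by_cases hlam : lam = Er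
    · -- degenerate centre: sandwich between Ioi Γ and Ici Γ
      have hsΓ' : s = Γ := by
        rw [hs, hlam]; simp [Real.sqrt_sq hΓ.le]
      rw [hsΓ']
      have hup : Set.Ioi Γ ⊆ S := by
        intro ε hε
        have hεΓ : Γ < ε := hε
        have hQ : (Er - lam) ^ 2 + (ε - Γ) ^ 2 ≠ 0 :=
          sq_add_sq_ne_right _ (sub_ne_zero.2 hεΓ.ne')
        exact (hcrit ε (hΓ.trans hεΓ) hQ).2 (by rw [hsΓ']; exact hεΓ.le)
      have hlow : ∀ ε ∈ S, Γ ≤ ε := by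
        intro ε hε
        by_contra hcon
        push_neg at hcon
        have hQ : (Er - lam) ^ 2 + (ε - Γ) ^ 2 ≠ 0 :=
          sq_add_sq_ne_right _ (sub_ne_zero.2 hcon.ne)
        have := (hcrit ε hε.1 hQ).1 hε
        rw [hsΓ'] at this
        exact absurd this (not_le.2 hcon)
      refine le_antisymm ?_ ?_
      · calc sInf S ≤ sInf (Set.Ioi Γ) :=
              csInf_le_csInf ⟨Γ, hlow⟩ (Set.nonempty_Ioi) hup
          _ = Γ := csInf_Ioi
      · exact le_csInf ⟨Γ + 1, hup (by simp [lt_add_one])⟩ hlow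
    · -- nondegenerate: S = Ici s
      have hSeq : S = Set.Ici s := by
        ext ε
        constructor
        · intro hε
          have hQ : (Er - lam) ^ 2 + (ε - Γ) ^ 2 ≠ 0 :=
            sq_add_sq_ne_left _ (sub_ne_zero.2 (Ne.symm hlam))
          exact (hcrit ε hε.1 hQ).1 hε
        · intro hε
          have hε' : 0 < ε := lt_of_lt_of_le hspos hε
          have hQ : (Er - lam) ^ 2 + (ε - Γ) ^ 2 ≠ 0 :=
            sq_add_sq_ne_left _ (sub_ne_zero.2 (Ne.symm hlam))
          exact (hcrit ε hε' hQ).2 hε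
      rw [hSeq, csInf_Ici]
  refine ⟨hmain, ?_, ?_⟩
  · rw [hmain Er]
    simp [Real.sqrt_sq hΓ.le]
  · intro lam hlam
    rw [hmain Er, hmain lam]
    have h1 : (0:ℝ) < (lam - Er) ^ 2 := by
      have h0 : lam - Er ≠ 0 := sub_ne_zero.2 hlam
      positivity
    have h2 : Γ ^ 2 + (Er - Er) ^ 2 < Γ ^ 2 + (lam - Er) ^ 2 := by
      simp only [sub_self]
      nlinarith
    exact Real.sqrt_lt_sqrt (by positivity) h2
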